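/- arXiv:2404.09745 — 5 statements merged into one kernel-verified Lean document; each statement's English description precedes it below -/
import Mathlib

section
/- Let (X, m) be a probability space and let f_i, F ∈ L²(X, m) (i ∈ ℕ) be such that f_i → F weakly in L²(X, m). Then there exists a subsequence (f_{i_j}) such that the Cesàro averages along squares converge almost everywhere: (1/ℓ²) Σ_{j=1}^{ℓ²} f_{i_j}(x) → F(x) for m-almost every x ∈ X as ℓ → ∞. -/
open MeasureTheory Filter Topology

lemma lp_coeFn_sum {X : Type*} [MeasurableSpace X] {m : Measure X} {p : ENNReal}
    (s : Finset ℕ) (g : ℕ → Lp ℝ p m) :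
    (((∑ j ∈ s, g j : Lp ℝ p m) : X → ℝ)) =ᵐ[m] fun x => ∑ j ∈ s, (g j : X → ℝ) x := by
  classical
  induction s using Finset.induction_on with
  | empty => simp only [Finset.sum_empty]; exact Lp.coeFn_zero (E := ℝ) (p := p) (μ := m)
  | insert _ _ hnotmem ih =>
    rename_i a s'
    rw [Finset.sum_insert hnotmem]
    filter_upwards [Lp.coeFn_add (g a) (∑ j ∈ s', g j), ih] with x h1 h2
    rw [Finset.sum_insert hnotmem, h1, Pi.add_apply, h2]

lemma banach_saks_aux {H : Type*} [NormedAddCommGroup H] [InnerProductSpace ℝ H]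
    (v : ℕ → H) (C : ℝ) (hC : ∀ i, ‖v i‖ ≤ C)
    (hw : ∀ w : H, Tendsto (fun i => (inner ℝ (v i) w : ℝ)) atTop (𝓝 0)) :
    ∃ φ : ℕ → ℕ, StrictMono φ ∧
      ∀ n, ‖∑ j ∈ Finset.range n, v (φ j)‖ ^ 2 ≤ (C ^ 2 + 4) * n := by
  have hC0 : 0 ≤ C := le_trans (norm_nonneg _) (hC 0)
  have hsel : ∀ (k p : ℕ), ∃ N, p < N ∧ ∀ l ≤ p, |(inner ℝ (v N) (v l) : ℝ)| ≤ (1/2 : ℝ) ^ k := by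
    intro k p
    have hev : ∀ᶠ i in atTop, (p < i ∧ ∀ l ∈ Finset.range (p+1), |(inner ℝ (v i) (v l) : ℝ)| ≤ (1/2:ℝ)^k) := by
      refine (eventually_gt_atTop p).and ?_
      rw [eventually_all_finset]
      intro l _
      have hpos : (0:ℝ) < (1/2:ℝ)^k := by positivity
      have habs : Tendsto (fun i => |(inner ℝ (v i) (v l) : ℝ)|) atTop (𝓝 0) := by
        simpa using (hw (v l)).abs
      exact (habs.eventually_lt_const hpos).mono (fun i hi => le_of_lt hi)
    obtain ⟨N, hN1, hN2⟩ := hev.exists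
    exact ⟨N, hN1, fun l hl => hN2 l (Finset.mem_range.2 (Nat.lt_succ_of_le hl))⟩
  choose ψ hψ1 hψ2 using hsel
  set φ : ℕ → ℕ := fun n => Nat.rec 0 (fun k p => ψ (k+1) p) n with hφ
  have hφs : ∀ k, φ (k+1) = ψ (k+1) (φ k) := fun k => rfl
  have hmono : StrictMono φ := strictMono_nat_of_lt_succ (fun k => by rw [hφs]; exact hψ1 _ _)
  have hkey : ∀ k, ∀ j < k, |(inner ℝ (v (φ k)) (v (φ j)) : ℝ)| ≤ (1/2:ℝ)^k := by
    intro k j hj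
    cases k with
    | zero => omega
    | succ k' =>
      rw [hφs]
      exact hψ2 (k'+1) (φ k') (φ j) (hmono.monotone (Nat.lt_succ_iff.1 hj))
  refine ⟨φ, hmono, ?_⟩
  have hgeo : ∀ n, ∑ k ∈ Finset.range n, (k:ℝ) * (1/2:ℝ)^k ≤ 2 := by
    intro n
    have hs : HasSum (fun k : ℕ => (k:ℝ) * (1/2:ℝ)^k) ((1/2) / (1 - 1/2)^2) :=
      hasSum_coe_mul_geometric_of_norm_lt_one (by norm_num)
    have h2 : ((1/2:ℝ) / (1 - 1/2)^2) = 2 := by norm_num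
    calc ∑ k ∈ Finset.range n, (k:ℝ) * (1/2:ℝ)^k
        ≤ ∑' k : ℕ, (k:ℝ) * (1/2:ℝ)^k :=
          Summable.sum_le_tsum _ (fun k _ => by positivity) hs.summable
      _ = 2 := by rw [hs.tsum_eq, h2]
  have hmain : ∀ n, ‖∑ j ∈ Finset.range n, v (φ j)‖ ^ 2
      ≤ C ^ 2 * n + 2 * ∑ k ∈ Finset.range n, (k:ℝ) * (1/2:ℝ)^k := by
    intro n
    induction n with
    | zero => simp
    | succ n ih =>
      rw [Finset.sum_range_succ, norm_add_sq_real]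
      have h1 : (inner ℝ (∑ j ∈ Finset.range n, v (φ j)) (v (φ n)) : ℝ) ≤ (n:ℝ) * (1/2:ℝ)^n := by
        rw [sum_inner]
        calc (∑ j ∈ Finset.range n, (inner ℝ (v (φ j)) (v (φ n)) : ℝ))
            ≤ ∑ j ∈ Finset.range n, |(inner ℝ (v (φ j)) (v (φ n)) : ℝ)| :=
              Finset.sum_le_sum (fun j _ => le_abs_self _)
          _ ≤ ∑ j ∈ Finset.range n, (1/2:ℝ)^n := by
              refine Finset.sum_le_sum (fun j hj => ?_)
              rw [real_inner_comm]
              exact hkey n j (Finset.mem_range.1 hj)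
          _ = (n:ℝ) * (1/2:ℝ)^n := by simp [mul_comm]
      have h2 : ‖v (φ n)‖ ^ 2 ≤ C ^ 2 := by
        have := hC (φ n); nlinarith [norm_nonneg (v (φ n))]
      rw [Finset.sum_range_succ]
      push_cast
      nlinarith [ih]
  intro n
  rcases Nat.eq_zero_or_pos n with h | h
  · simp [h]
  · have h1 := hmain n
    have h2 := hgeo n
    have h3 : ‖∑ j ∈ Finset.range n, v (φ j)‖ ^ 2 ≤ C ^ 2 * n + 4 := by linarith
    have hn1 : (1:ℝ) ≤ n := by exact_mod_cast h
    nlinarith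

/-- If `f_i → F` weakly in `L²(X, m)`, then there is a subsequence whose Cesàro averages
along squares converge to `F` almost everywhere. -/
theorem stmt_1
    {X : Type*} [MeasurableSpace X] (m : Measure X) [IsProbabilityMeasure m]
    (f : ℕ → X → ℝ) (F : X → ℝ)
    (hf : ∀ i, MemLp (f i) 2 m) (hF : MemLp F 2 m)
    (hweak : ∀ g : X → ℝ, MemLp g 2 m →
      Tendsto (fun i => ∫ x, f i x * g x ∂m) atTop (nhds (∫ x, F x * g x ∂m))) :
    ∃ i : ℕ → ℕ, StrictMono i ∧
      ∀ᵐ x ∂m, Tendsto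
        (fun ℓ : ℕ => (1 / (ℓ : ℝ) ^ 2) * ∑ j ∈ Finset.range (ℓ ^ 2), f (i j) x)
        atTop (nhds (F x)) := by
  classical
  set u : ℕ → Lp ℝ 2 m := fun i => (hf i).toLp (f i) with hu
  set U : Lp ℝ 2 m := hF.toLp F with hU
  set v : ℕ → Lp ℝ 2 m := fun i => u i - U with hv
  have hinner : ∀ (w : Lp ℝ 2 m) (i : ℕ), (inner ℝ (u i) w : ℝ) = ∫ x, f i x * (w : X → ℝ) x ∂m := by
    intro w i
    rw [L2.inner_def]
    refine integral_congr_ae ?_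
    filter_upwards [(hf i).coeFn_toLp] with x hx
    simp [hu, hx, RCLike.inner_apply]
    ring
  have hinnerU : ∀ (w : Lp ℝ 2 m), (inner ℝ U w : ℝ) = ∫ x, F x * (w : X → ℝ) x ∂m := by
    intro w
    rw [L2.inner_def]
    refine integral_congr_ae ?_
    filter_upwards [hF.coeFn_toLp] with x hx
    simp [hU, hx, RCLike.inner_apply]
    ring
  have hwk : ∀ w : Lp ℝ 2 m, Tendsto (fun i => (inner ℝ (v i) w : ℝ)) atTop (𝓝 0) := by
    intro w
    have h1 := hweak (w : X → ℝ) (Lp.memLp w)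
    have h2 : Tendsto (fun i => (inner ℝ (u i) w : ℝ) - (inner ℝ U w : ℝ)) atTop (𝓝 0) := by
      simpa [hinner, hinnerU] using h1.sub_const (∫ x, F x * (w : X → ℝ) x ∂m)
    refine h2.congr (fun i => ?_)
    simp [hv, inner_sub_left]
  obtain ⟨C, hC⟩ : ∃ C, ∀ i, ‖v i‖ ≤ C := by
    obtain ⟨C', hC'⟩ := banach_steinhaus (g := fun i => (innerSL ℝ (v i)))
      (fun w => by
        obtain ⟨B, hB⟩ := ((hwk w).norm.bddAbove_range)
        exact ⟨B, fun i => hB ⟨i, rfl⟩⟩)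
    exact ⟨C', fun i => by rw [← innerSL_apply_norm ℝ (v i)]; exact hC' i⟩
  obtain ⟨φ, hφmono, hφbd⟩ := banach_saks_aux v C hC hwk
  refine ⟨φ, hφmono, ?_⟩
  set w : ℕ → Lp ℝ 2 m := fun ℓ => (((ℓ:ℝ)^2)⁻¹) • ∑ j ∈ Finset.range (ℓ^2), v (φ j) with hwdef
  have hC40 : (0:ℝ) ≤ C^2 + 4 := by positivity
  have hwnorm : ∀ ℓ : ℕ, ‖w ℓ‖^2 ≤ (C^2+4) / (ℓ:ℝ)^2 := by
    intro ℓ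
    rcases Nat.eq_zero_or_pos ℓ with h | h
    · subst h
      simp [hwdef]
    · have hℓ : (0:ℝ) < (ℓ:ℝ)^2 := by positivity
      have := hφbd (ℓ^2)
      rw [hwdef]
      rw [norm_smul]
      have hcast : ((ℓ^2 : ℕ) : ℝ) = (ℓ:ℝ)^2 := by push_cast; ring
      rw [hcast] at this
      rw [mul_pow, norm_inv, Real.norm_eq_abs, abs_of_pos hℓ]
      rw [div_eq_mul_inv]
      calc ((ℓ:ℝ)^2)⁻¹^2 * ‖∑ j ∈ Finset.range (ℓ^2), v (φ j)‖^2
          ≤ ((ℓ:ℝ)^2)⁻¹^2 * ((C^2+4) * (ℓ:ℝ)^2) := by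
            refine mul_le_mul_of_nonneg_left this (by positivity)
        _ = (C^2+4) * ((ℓ:ℝ)^2)⁻¹ := by field_simp
  -- ∫ (w ℓ)² = ‖w ℓ‖²
  have hint : ∀ ℓ : ℕ, ∫ x, ((w ℓ : X → ℝ) x)^2 ∂m = ‖w ℓ‖^2 := by
    intro ℓ
    rw [← real_inner_self_eq_norm_sq, L2.inner_def]
    refine integral_congr_ae (ae_of_all _ (fun x => ?_))
    simp [RCLike.inner_apply, sq]
  have hintg : ∀ ℓ : ℕ, Integrable (fun x => ((w ℓ : X → ℝ) x)^2) m := by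
    intro ℓ
    refine (L2.integrable_inner (𝕜 := ℝ) (w ℓ) (w ℓ)).congr (ae_of_all _ (fun x => ?_))
    simp [RCLike.inner_apply, sq]
  set G : ℕ → X → ENNReal := fun ℓ x => ENNReal.ofReal (((w ℓ : X → ℝ) x)^2) with hG
  have hGmeas : ∀ ℓ, AEMeasurable (G ℓ) m := fun ℓ =>
    ENNReal.measurable_ofReal.comp_aemeasurable
      (((Lp.aestronglyMeasurable (w ℓ)).aemeasurable).pow aemeasurable_const)
  have hGint : ∀ ℓ, ∫⁻ x, G ℓ x ∂m = ENNReal.ofReal (‖w ℓ‖^2) := by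
    intro ℓ
    rw [← hint ℓ, hG]
    exact (ofReal_integral_eq_lintegral_ofReal (hintg ℓ) (ae_of_all _ (fun x => sq_nonneg _))).symm
  have hsumm : Summable (fun ℓ : ℕ => (C^2+4) / (ℓ:ℝ)^2) := by
    have : Summable (fun ℓ : ℕ => 1 / (ℓ:ℝ)^2) := by
      simpa using Real.summable_one_div_nat_pow.2 one_lt_two
    simpa [div_eq_mul_inv, mul_comm, mul_assoc, one_mul] using this.mul_left (C^2+4)
  have htsum : ∑' ℓ : ℕ, ∫⁻ x, G ℓ x ∂m ≠ ⊤ := by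
    have hle : ∑' ℓ : ℕ, ∫⁻ x, G ℓ x ∂m ≤ ∑' ℓ : ℕ, ENNReal.ofReal ((C^2+4) / (ℓ:ℝ)^2) := by
      refine ENNReal.tsum_le_tsum (fun ℓ => ?_)
      rw [hGint ℓ]
      exact ENNReal.ofReal_le_ofReal (hwnorm ℓ)
    refine ne_top_of_le_ne_top ?_ hle
    rw [← ENNReal.ofReal_tsum_of_nonneg (fun ℓ => by positivity) hsumm]
    exact ENNReal.ofReal_ne_top
  have haefin : ∀ᵐ x ∂m, ∑' ℓ : ℕ, G ℓ x < ⊤ := by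
    refine ae_lt_top' (AEMeasurable.ennreal_tsum hGmeas) ?_
    rw [lintegral_tsum hGmeas]
    exact htsum
  have haetend : ∀ᵐ x ∂m, Tendsto (fun ℓ => (w ℓ : X → ℝ) x) atTop (𝓝 0) := by
    filter_upwards [haefin] with x hx
    have h0 : Tendsto (fun ℓ => G ℓ x) atTop (𝓝 0) :=
      ENNReal.tendsto_atTop_zero_of_tsum_ne_top hx.ne
    have h1 : Tendsto (fun ℓ => ((w ℓ : X → ℝ) x)^2) atTop (𝓝 0) := by
      have h0' := (ENNReal.tendsto_toReal (a := (0:ENNReal)) (by simp)).comp h0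
      refine h0'.congr (fun ℓ => ?_)
      simp [hG, Function.comp, ENNReal.toReal_ofReal (sq_nonneg _)]
    rw [tendsto_zero_iff_abs_tendsto_zero]
    have h2 : Tendsto (fun ℓ => Real.sqrt (((w ℓ : X → ℝ) x)^2)) atTop (𝓝 (Real.sqrt 0)) :=
      (Real.continuous_sqrt.continuousAt).tendsto.comp h1
    simpa [Real.sqrt_sq_eq_abs, Function.comp_def] using h2
  have hvco : ∀ᵐ x ∂m, ∀ j : ℕ, (v (φ j) : X → ℝ) x = f (φ j) x - F x := by
    rw [ae_all_iff]
    intro j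
    filter_upwards [Lp.coeFn_sub (u (φ j)) U, (hf (φ j)).coeFn_toLp, hF.coeFn_toLp] with x h1 h2 h3
    rw [hv]
    simp only []
    rw [h1, Pi.sub_apply, h2, h3]
  have hwco : ∀ᵐ x ∂m, ∀ ℓ : ℕ,
      (w ℓ : X → ℝ) x = ((ℓ:ℝ)^2)⁻¹ * ∑ j ∈ Finset.range (ℓ^2), (v (φ j) : X → ℝ) x := by
    rw [ae_all_iff]
    intro ℓ
    filter_upwards [Lp.coeFn_smul (((ℓ:ℝ)^2)⁻¹) (∑ j ∈ Finset.range (ℓ^2), v (φ j)),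
      lp_coeFn_sum (Finset.range (ℓ^2)) (fun j => v (φ j))] with x h1 h2
    rw [hwdef]
    simp only []
    rw [h1, Pi.smul_apply, h2, smul_eq_mul]
  filter_upwards [haetend, hvco, hwco] with x hx h1 h2
  have heq : ∀ ℓ : ℕ, 1 ≤ ℓ →
      (1 / (ℓ:ℝ)^2) * ∑ j ∈ Finset.range (ℓ^2), f (φ j) x = (w ℓ : X → ℝ) x + F x := by
    intro ℓ hℓ
    have hℓ0 : ((ℓ:ℝ)^2) ≠ 0 := by positivity
    rw [h2 ℓ]
    have : ∑ j ∈ Finset.range (ℓ^2), (v (φ j) : X → ℝ) x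
        = (∑ j ∈ Finset.range (ℓ^2), f (φ j) x) - (ℓ:ℝ)^2 * F x := by
      rw [Finset.sum_congr rfl (fun j _ => h1 j), Finset.sum_sub_distrib,
        Finset.sum_const, Finset.card_range, nsmul_eq_mul]
      push_cast
      ring
    rw [this]
    field_simp
    ring
  have hlim : Tendsto (fun ℓ => (w ℓ : X → ℝ) x + F x) atTop (𝓝 (F x)) := by
    simpa using hx.add_const (F x)
  refine Tendsto.congr' ?_ hlim
  filter_upwards [eventually_ge_atTop 1] with ℓ hℓ
  exact (heq ℓ hℓ).symm
end

section
/- Let (X, d) be a metric space, x ∈ X, and let σ₁, σ₂ be geodesic lines in X. Then for i = 1, 2 the limit b_i := lim_{t→∞} (d(x, σ_i(t)) − t) exists (the function t ↦ d(x, σ_i(t)) − t is nonincreasing on [0, ∞) and bounded below by −d(x, σ_i(0))), and the following identity holds: limsup_{t→∞} exp(d(σ₁(t), σ₂(t)) − 2t) = e^{b₁ + b₂} · limsup_{t→∞} exp(−2 (σ₁(t) | σ₂(t))_x). In particular, d⁺(σ₁, σ₂) := limsup_{t→∞} exp(d(σ₁(t), σ₂(t)) − 2t) is finite, bounded above by e^{b₁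 + b₂}. -/
open Filter Topology

/-- The Gromov product of `p, q` with respect to `x`. -/
noncomputable def gromovProd {X : Type*} [MetricSpace X] (x p q : X) : ℝ :=
  (dist x p + dist x q - dist p q) / 2

section Aux

variable {X : Type*} [MetricSpace X]

lemma anti_aux (x : X) (σ : ℝ → X) (h : ∀ s t : ℝ, dist (σ s) (σ t) = |s - t|) :
    AntitoneOn (fun t => dist x (σ t) - t) (Set.Ici 0) := by
  intro s hs t ht hst
  have : dist x (σ t) ≤ dist x (σ s) + dist (σ s) (σ t) := dist_triangle _ _ _
  rw [h s t, abs_of_nonpos (by linarith)] at this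
  simp only
  linarith

lemma lb_aux (x : X) (σ : ℝ → X) (h : ∀ s t : ℝ, dist (σ s) (σ t) = |s - t|) :
    ∀ t : ℝ, -dist x (σ 0) ≤ dist x (σ t) - t := by
  intro t
  have h1 : dist (σ 0) (σ t) ≤ dist (σ 0) x + dist x (σ t) := dist_triangle _ _ _
  have h2 : t ≤ |0 - t| := by rw [zero_sub, abs_neg]; exact le_abs_self t
  rw [h 0 t] at h1
  rw [dist_comm (σ 0) x] at h1
  linarith

lemma tendsto_aux (x : X) (σ : ℝ → X) (h : ∀ s t : ℝ, dist (σ s) (σ t) = |s - t|) :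
    ∃ b : ℝ, Tendsto (fun t => dist x (σ t) - t) atTop (nhds b) := by
  set F : ℝ → ℝ := fun t => dist x (σ (max t 0)) - max t 0 with hF
  have hanti : Antitone F := by
    intro s t hst
    exact anti_aux x σ h (le_max_right s 0) (le_max_right t 0) (max_le_max hst le_rfl)
  have hbdd : BddBelow (Set.range F) := by
    refine ⟨-dist x (σ 0), ?_⟩
    rintro _ ⟨t, rfl⟩
    exact lb_aux x σ h (max t 0)
  refine ⟨⨅ t, F t, ?_⟩
  have := tendsto_atTop_ciInf hanti hbdd
  refine this.congr' ?_
  filter_upwards [eventually_ge_atTop (0 : ℝ)] with t ht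
  simp [hF, max_eq_left ht]

end Aux

/-- For geodesic lines `σ₁, σ₂` in a metric space and a basepoint `x`, the Busemann-type
limits `b_i = lim_{t→∞} (d(x, σ_i(t)) - t)` exist (the functions are nonincreasing on
`[0,∞)` and bounded below by `-d(x, σ_i(0))`), and
`limsup exp(d(σ₁(t),σ₂(t)) - 2t) = e^{b₁+b₂} · limsup exp(-2(σ₁(t)|σ₂(t))_x)`;
in particular this quantity is at most `e^{b₁+b₂}`. -/
theorem stmt_4 {X : Type*} [MetricSpace X] (x : X) (σ₁ σ₂ : ℝ → X)
    (h1 : ∀ s t : ℝ, dist (σ₁ s) (σ₁ t) = |s - t|)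
    (h2 : ∀ s t : ℝ, dist (σ₂ s) (σ₂ t) = |s - t|) :
    ∃ b₁ b₂ : ℝ,
      AntitoneOn (fun t => dist x (σ₁ t) - t) (Set.Ici 0) ∧
      (∀ t : ℝ, -dist x (σ₁ 0) ≤ dist x (σ₁ t) - t) ∧
      AntitoneOn (fun t => dist x (σ₂ t) - t) (Set.Ici 0) ∧
      (∀ t : ℝ, -dist x (σ₂ 0) ≤ dist x (σ₂ t) - t) ∧
      Tendsto (fun t => dist x (σ₁ t) - t) atTop (nhds b₁) ∧
      Tendsto (fun t => dist x (σ₂ t) - t) atTop (nhds b₂) ∧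
      Filter.limsup (fun t => Real.exp (dist (σ₁ t) (σ₂ t) - 2 * t)) atTop
        = Real.exp (b₁ + b₂) *
          Filter.limsup (fun t => Real.exp (-2 * gromovProd x (σ₁ t) (σ₂ t))) atTop ∧
      Filter.limsup (fun t => Real.exp (dist (σ₁ t) (σ₂ t) - 2 * t)) atTop
        ≤ Real.exp (b₁ + b₂) := by
  obtain ⟨b₁, hb₁⟩ := tendsto_aux x σ₁ h1
  obtain ⟨b₂, hb₂⟩ := tendsto_aux x σ₂ h2
  set u : ℝ → ℝ := fun t => Real.exp ((dist x (σ₁ t) - t) + (dist x (σ₂ t) - t)) with hu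
  set v : ℝ → ℝ := fun t => Real.exp (-2 * gromovProd x (σ₁ t) (σ₂ t)) with hv
  have hdecomp : (fun t => Real.exp (dist (σ₁ t) (σ₂ t) - 2 * t)) = fun t => u t * v t := by
    funext t
    rw [hu, hv]
    simp only
    rw [← Real.exp_add]
    congr 1
    unfold gromovProd
    ring
  have hutend : Tendsto u atTop (nhds (Real.exp (b₁ + b₂))) :=
    (Real.continuous_exp.tendsto _).comp (hb₁.add hb₂)
  -- boundedness facts
  have hu0 : (0 : ℝ → ℝ) ≤ᶠ[atTop] u := Eventually.of_forall fun t => (Real.exp_pos _).le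
  have hubdd : IsBoundedUnder (· ≤ ·) atTop u := hutend.isBoundedUnder_le
  have hv0 : (0 : ℝ → ℝ) ≤ᶠ[atTop] v := Eventually.of_forall fun t => (Real.exp_pos _).le
  have hv1 : ∀ t, v t ≤ 1 := by
    intro t
    rw [hv]
    simp only
    rw [← Real.exp_zero]
    apply Real.exp_le_exp.2
    have : 0 ≤ gromovProd x (σ₁ t) (σ₂ t) := by
      unfold gromovProd
      have := dist_triangle (σ₁ t) x (σ₂ t)
      rw [dist_comm (σ₁ t) x] at this
      linarith
    linarith
  have hvbdd : IsBoundedUnder (· ≤ ·) atTop v := isBoundedUnder_of ⟨1, hv1⟩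
  have key : Filter.limsup (fun t => u t * v t) atTop
      = Real.exp (b₁ + b₂) * Filter.limsup v atTop := by
    apply le_antisymm
    · have := limsup_mul_le hu0.frequently hubdd hv0 hvbdd
      rwa [hutend.limsup_eq] at this
    · have := le_limsup_mul hv0.frequently hvbdd hu0 hubdd
      rw [hutend.liminf_eq] at this
      calc Real.exp (b₁ + b₂) * Filter.limsup v atTop
          = Filter.limsup v atTop * Real.exp (b₁ + b₂) := mul_comm _ _
        _ ≤ Filter.limsup (fun t => v t * u t) atTop := this
        _ = Filter.limsup (fun t => u t * v t) atTop := by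
            congr 1; funext t; exact mul_comm _ _
  have hvle1 : Filter.limsup v atTop ≤ 1 := by
    apply limsup_le_of_le
    · exact (isBoundedUnder_of_eventually_ge hv0).isCoboundedUnder_le
    · exact Eventually.of_forall hv1
  have hvnonneg : 0 ≤ Filter.limsup v atTop :=
    le_limsup_of_frequently_le hv0.frequently hvbdd
  refine ⟨b₁, b₂, anti_aux x σ₁ h1, lb_aux x σ₁ h1, anti_aux x σ₂ h2, lb_aux x σ₂ h2,
    hb₁, hb₂, ?_, ?_⟩
  · rw [hdecomp]; exact key
  · rw [hdecomp, key]
    calc Real.exp (b₁ + b₂) * Filter.limsup v atTop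
        ≤ Real.exp (b₁ + b₂) * 1 := by
          exact mul_le_mul_of_nonneg_left hvle1 (Real.exp_pos _).le
      _ = Real.exp (b₁ + b₂) := mul_one _
end

section
/- Let (X, d) be a δ-hyperbolic metric space for some δ ≥ 0. Then there exists a constant C ≥ 1, depending only on δ, such that for all geodesic lines σ₁, σ₂ in X and all s₁, s₂ ∈ ℝ: C⁻¹ e^{s₁ + s₂} d⁺(σ₁, σ₂) ≤ d⁺(φ_{s₁}σ₁, φ_{s₂}σ₂) ≤ C e^{s₁ + s₂} d⁺(σ₁, σ₂), and C⁻¹ e^{−(s₁ + s₂)} d⁻(σ₁, σ₂) ≤ d⁻(φ_{s₁}σ₁, φ_{s₂}σ₂) ≤ C e^{−(s₁ + s₂)} d⁻(σ₁, σ₂). -/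
open Filter Topology

/-- The Hamenstädt-type distance `d⁺` on geodesic lines. -/
noncomputable def dplus {X : Type*} [MetricSpace X] (σ₁ σ₂ : ℝ → X) : ℝ :=
  Filter.limsup (fun t => Real.exp (dist (σ₁ t) (σ₂ t) - 2 * t)) Filter.atTop

/-- The Hamenstädt-type distance `d⁻` on geodesic lines. -/
noncomputable def dminus {X : Type*} [MetricSpace X] (σ₁ σ₂ : ℝ → X) : ℝ :=
  Filter.limsup (fun t => Real.exp (dist (σ₁ (-t)) (σ₂ (-t)) - 2 * t)) Filter.atTop

universe u

section Aux

variable {X : Type*} [MetricSpace X]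

/-- A geodesic line. -/
def IsGeodLine (σ : ℝ → X) : Prop := ∀ s t : ℝ, dist (σ s) (σ t) = |s - t|

lemma IsGeodLine.shift {σ : ℝ → X} (h : IsGeodLine σ) (a : ℝ) :
    IsGeodLine (fun t => σ (t + a)) := fun s t => by
  simp only; rw [h]; congr 1; ring

lemma IsGeodLine.neg {σ : ℝ → X} (h : IsGeodLine σ) :
    IsGeodLine (fun t => σ (-t)) := fun s t => by
  simp only; rw [h, ← abs_neg]; congr 1; ring

lemma dplus_congr {σ₁ σ₂ τ₁ τ₂ : ℝ → X} (h₁ : σ₁ = τ₁) (h₂ : σ₂ = τ₂) :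
    dplus σ₁ σ₂ = dplus τ₁ τ₂ := by rw [h₁, h₂]

/-- Key geometric estimate from δ-hyperbolicity. -/
lemma key_est {δ : ℝ} (hδ : 0 ≤ δ)
    (hyp : ∀ p q r x : X, min (gromovProd x p q) (gromovProd x q r) - δ ≤ gromovProd x p r)
    {σ₁ σ₂ : ℝ → X} (h₁ : IsGeodLine σ₁) (h₂ : IsGeodLine σ₂)
    {u v u' v' : ℝ} (hu : 0 ≤ u) (hv : 0 ≤ v) (huu : u ≤ u') (hvv : v ≤ v') :
    dist (σ₁ u') (σ₂ v') - u' - v' ≤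
      max (dist (σ₁ u) (σ₂ v) - u - v)
        (max (3 * dist (σ₁ 0) (σ₂ 0) - 2 * u) (3 * dist (σ₁ 0) (σ₂ 0) - 2 * v)) + 4 * δ := by
  have hc : (0:ℝ) ≤ dist (σ₁ 0) (σ₂ 0) := dist_nonneg
  have e1 : dist (σ₁ 0) (σ₁ u') = u' := by
    rw [h₁, abs_of_nonpos (by linarith : (0:ℝ) - u' ≤ 0)]; ring
  have e2 : dist (σ₁ u) (σ₁ u') = u' - u := by
    rw [h₁, abs_of_nonpos (by linarith : u - u' ≤ 0)]; ring
  have e3 : dist (σ₂ v) (σ₂ v') = v' - v := by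
    rw [h₂, abs_of_nonpos (by linarith : v - v' ≤ 0)]; ring
  have e4 : dist (σ₁ 0) (σ₁ u) = u := by
    rw [h₁, abs_of_nonpos (by linarith : (0:ℝ) - u ≤ 0)]; ring
  have e5 : dist (σ₂ 0) (σ₂ v) = v := by
    rw [h₂, abs_of_nonpos (by linarith : (0:ℝ) - v ≤ 0)]; ring
  have e6 : dist (σ₂ 0) (σ₂ v') = v' := by
    rw [h₂, abs_of_nonpos (by linarith : (0:ℝ) - v' ≤ 0)]; ring
  have t1 : v - dist (σ₁ 0) (σ₂ 0) ≤ dist (σ₁ 0) (σ₂ v) := by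
    have h := dist_triangle (σ₂ 0) (σ₁ 0) (σ₂ v)
    rw [e5, dist_comm (σ₂ 0) (σ₁ 0)] at h; linarith
  have t2 : v' - dist (σ₁ 0) (σ₂ 0) ≤ dist (σ₁ 0) (σ₂ v') := by
    have h := dist_triangle (σ₂ 0) (σ₁ 0) (σ₂ v')
    rw [e6, dist_comm (σ₂ 0) (σ₁ 0)] at h; linarith
  have t3 : dist (σ₁ 0) (σ₂ v') ≤ dist (σ₁ 0) (σ₂ v) + (v' - v) := by
    have h := dist_triangle (σ₁ 0) (σ₂ v) (σ₂ v')
    rw [e3] at h; linarith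
  have t4 : dist (σ₁ 0) (σ₂ v) ≤ dist (σ₁ 0) (σ₂ 0) + v := by
    have h := dist_triangle (σ₁ 0) (σ₂ 0) (σ₂ v)
    rw [e5] at h; linarith
  have hy1 := hyp (σ₁ u') (σ₂ v) (σ₂ v') (σ₁ 0)
  have hy2 := hyp (σ₁ u') (σ₁ u) (σ₂ v) (σ₁ 0)
  simp only [gromovProd] at hy1 hy2
  rw [e1, e3] at hy1
  rw [e1, e4, dist_comm (σ₁ u') (σ₁ u), e2] at hy2
  have M1 : dist (σ₁ u) (σ₂ v) - u - v ≤
      max (dist (σ₁ u) (σ₂ v) - u - v)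
        (max (3 * dist (σ₁ 0) (σ₂ 0) - 2 * u) (3 * dist (σ₁ 0) (σ₂ 0) - 2 * v)) :=
    le_max_left _ _
  have M2 : 3 * dist (σ₁ 0) (σ₂ 0) - 2 * u ≤
      max (dist (σ₁ u) (σ₂ v) - u - v)
        (max (3 * dist (σ₁ 0) (σ₂ 0) - 2 * u) (3 * dist (σ₁ 0) (σ₂ 0) - 2 * v)) :=
    le_trans (le_max_left _ _) (le_max_right _ _)
  have M3 : 3 * dist (σ₁ 0) (σ₂ 0) - 2 * v ≤
      max (dist (σ₁ u) (σ₂ v) - u - v)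
        (max (3 * dist (σ₁ 0) (σ₂ 0) - 2 * u) (3 * dist (σ₁ 0) (σ₂ 0) - 2 * v)) :=
    le_trans (le_max_right _ _) (le_max_right _ _)
  rcases min_cases ((u' + dist (σ₁ 0) (σ₂ v) - dist (σ₁ u') (σ₂ v)) / 2)
      ((dist (σ₁ 0) (σ₂ v) + dist (σ₁ 0) (σ₂ v') - (v' - v)) / 2) with ⟨hm1, _⟩ | ⟨hm1, _⟩ <;>
    rw [hm1] at hy1 <;>
  rcases min_cases ((u' + u - (u' - u)) / 2)
      ((u + dist (σ₁ 0) (σ₂ v) - dist (σ₁ u) (σ₂ v)) / 2) with ⟨hm2, _⟩ | ⟨hm2, _⟩ <;>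
    rw [hm2] at hy2 <;>
  linarith

/-- Main one-sided estimate. -/
lemma main_est {δ : ℝ} (hδ : 0 ≤ δ)
    (hyp : ∀ p q r x : X, min (gromovProd x p q) (gromovProd x q r) - δ ≤ gromovProd x p r)
    {σ₁ σ₂ : ℝ → X} (h₁ : IsGeodLine σ₁) (h₂ : IsGeodLine σ₂) (s₁ s₂ : ℝ) :
    dplus (fun t => σ₁ (t + s₁)) (fun t => σ₂ (t + s₂)) ≤
      Real.exp (4 * δ) * Real.exp (s₁ + s₂) * dplus σ₁ σ₂ := by
  set c := dist (σ₁ 0) (σ₂ 0) with hcdef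
  set G : ℝ → ℝ := fun t => Real.exp (dist (σ₁ t) (σ₂ t) - 2 * t) with hGdef
  set L := Filter.limsup G Filter.atTop with hLdef
  have hGle : ∀ᶠ t in atTop, G t ≤ Real.exp c := by
    filter_upwards [eventually_ge_atTop (0:ℝ)] with t ht
    apply Real.exp_le_exp.2
    have d1 : dist (σ₁ t) (σ₁ 0) = t := by
      rw [h₁, abs_of_nonneg (by linarith : (0:ℝ) ≤ t - 0)]; ring
    have d2 : dist (σ₂ 0) (σ₂ t) = t := by
      rw [h₂, abs_of_nonpos (by linarith : (0:ℝ) - t ≤ 0)]; ring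
    have tr1 := dist_triangle (σ₁ t) (σ₁ 0) (σ₂ t)
    have tr2 := dist_triangle (σ₁ 0) (σ₂ 0) (σ₂ t)
    rw [d1] at tr1; rw [d2] at tr2; linarith
  have hGbdd : IsBoundedUnder (· ≤ ·) atTop G := ⟨Real.exp c, eventually_map.2 hGle⟩
  have hL0 : 0 ≤ L :=
    Filter.le_limsup_of_frequently_le
      ((Filter.Eventually.of_forall fun t => (Real.exp_pos _).le).frequently) hGbdd
  set F : ℝ → ℝ := fun t => Real.exp (dist (σ₁ (t + s₁)) (σ₂ (t + s₂)) - 2 * t) with hFdef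
  have hdpF : dplus (fun t => σ₁ (t + s₁)) (fun t => σ₂ (t + s₂)) = Filter.limsup F atTop := rfl
  have hmain : ∀ ε > (0:ℝ), Filter.limsup F atTop ≤ Real.exp (4 * δ + (s₁ + s₂)) * (L + ε) := by
    intro ε hε
    set M := 1 + |s₁| + |s₂| with hMdef
    have hshift : Tendsto (fun t : ℝ => t - M) atTop atTop := by
      apply tendsto_atTop_atTop.2
      intro b
      exact ⟨b + M, fun a ha => by linarith⟩
    have hev1 : ∀ᶠ t in atTop, G (t - M) < L + ε :=
      hshift.eventually (Filter.eventually_lt_of_limsup_lt (by linarith) hGbdd)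
    have hev2 : ∀ᶠ t in atTop, Real.exp (3 * c - 2 * (t - M)) < ε := by
      have ht : Tendsto (fun t : ℝ => Real.exp (3 * c - 2 * (t - M))) atTop (nhds 0) := by
        apply Real.tendsto_exp_atBot.comp
        apply tendsto_atBot.2
        intro b
        filter_upwards [eventually_ge_atTop ((3 * c + 2 * M - b) / 2)] with t ht
        linarith
      exact ht.eventually_lt_const hε
    apply Filter.limsup_le_of_le
      (Filter.isCoboundedUnder_le_of_le atTop (fun t => (Real.exp_pos _).le))
    filter_upwards [hev1, hev2, eventually_ge_atTop M] with t hG1 hG2 htM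
    have habs1 : -M ≤ s₁ := by
      have := neg_abs_le s₁; have := abs_nonneg s₂; simp only [hMdef]; linarith
    have habs2 : -M ≤ s₂ := by
      have := neg_abs_le s₂; have := abs_nonneg s₁; simp only [hMdef]; linarith
    have hk := key_est hδ hyp h₁ h₂ (u := t - M) (v := t - M) (u' := t + s₁) (v' := t + s₂)
      (by linarith) (by linarith) (by linarith) (by linarith)
    rw [max_self, ← hcdef] at hk
    have hmax : Real.exp (max (dist (σ₁ (t - M)) (σ₂ (t - M)) - (t - M) - (t - M))
        (3 * c - 2 * (t - M))) ≤ L + ε := by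
      rcases le_total (dist (σ₁ (t - M)) (σ₂ (t - M)) - (t - M) - (t - M))
          (3 * c - 2 * (t - M)) with h | h
      · rw [max_eq_right h]; linarith
      · rw [max_eq_left h]
        have heq : dist (σ₁ (t - M)) (σ₂ (t - M)) - (t - M) - (t - M)
            = dist (σ₁ (t - M)) (σ₂ (t - M)) - 2 * (t - M) := by ring
        rw [heq]
        exact le_of_lt hG1
    calc F t = Real.exp (dist (σ₁ (t + s₁)) (σ₂ (t + s₂)) - 2 * t) := rfl
      _ ≤ Real.exp (4 * δ + (s₁ + s₂)) *
          Real.exp (max (dist (σ₁ (t - M)) (σ₂ (t - M)) - (t - M) - (t - M))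
            (3 * c - 2 * (t - M))) := by
          rw [← Real.exp_add]
          apply Real.exp_le_exp.2
          linarith
      _ ≤ Real.exp (4 * δ + (s₁ + s₂)) * (L + ε) :=
          mul_le_mul_of_nonneg_left hmax (Real.exp_pos _).le
  have hfin : Filter.limsup F atTop ≤ Real.exp (4 * δ + (s₁ + s₂)) * L := by
    refine le_of_forall_pos_le_add fun ε hε => ?_
    have hKpos := Real.exp_pos (4 * δ + (s₁ + s₂))
    have h := hmain (ε / Real.exp (4 * δ + (s₁ + s₂))) (by positivity)
    calc Filter.limsup F atTop
        ≤ Real.exp (4 * δ + (s₁ + s₂)) * (L + ε / Real.exp (4 * δ + (s₁ + s₂))) := h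
      _ = Real.exp (4 * δ + (s₁ + s₂)) * L + ε := by field_simp
  rw [hdpF]
  calc Filter.limsup F atTop ≤ Real.exp (4 * δ + (s₁ + s₂)) * L := hfin
    _ = Real.exp (4 * δ) * Real.exp (s₁ + s₂) * dplus σ₁ σ₂ := by
        rw [Real.exp_add]; rfl

/-- Two-sided estimate for `dplus`. -/
lemma both_est {δ : ℝ} (hδ : 0 ≤ δ)
    (hyp : ∀ p q r x : X, min (gromovProd x p q) (gromovProd x q r) - δ ≤ gromovProd x p r)
    {σ₁ σ₂ : ℝ → X} (h₁ : IsGeodLine σ₁) (h₂ : IsGeodLine σ₂) (s₁ s₂ : ℝ) :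
    Real.exp (-(4 * δ)) * Real.exp (s₁ + s₂) * dplus σ₁ σ₂ ≤
        dplus (fun t => σ₁ (t + s₁)) (fun t => σ₂ (t + s₂)) ∧
      dplus (fun t => σ₁ (t + s₁)) (fun t => σ₂ (t + s₂)) ≤
        Real.exp (4 * δ) * Real.exp (s₁ + s₂) * dplus σ₁ σ₂ := by
  constructor
  · have h := main_est hδ hyp (h₁.shift s₁) (h₂.shift s₂) (-s₁) (-s₂)
    have e1 : (fun t => (fun t => σ₁ (t + s₁)) (t + -s₁)) = σ₁ := by
      funext t; simp only; congr 1; ring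
    have e2 : (fun t => (fun t => σ₂ (t + s₂)) (t + -s₂)) = σ₂ := by
      funext t; simp only; congr 1; ring
    rw [dplus_congr e1 e2] at h
    set S := dplus (fun t => σ₁ (t + s₁)) (fun t => σ₂ (t + s₂)) with hS
    have hS0 : 0 ≤ Real.exp (-(4 * δ)) * Real.exp (s₁ + s₂) := by positivity
    calc Real.exp (-(4 * δ)) * Real.exp (s₁ + s₂) * dplus σ₁ σ₂
        ≤ Real.exp (-(4 * δ)) * Real.exp (s₁ + s₂) *
          (Real.exp (4 * δ) * Real.exp (-s₁ + -s₂) * S) :=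
          mul_le_mul_of_nonneg_left h hS0
      _ = (Real.exp (-(4 * δ)) * Real.exp (4 * δ)) *
          (Real.exp (s₁ + s₂) * Real.exp (-s₁ + -s₂)) * S := by ring
      _ = S := by
          rw [← Real.exp_add, ← Real.exp_add,
            show -(4 * δ) + 4 * δ = 0 by ring, show s₁ + s₂ + (-s₁ + -s₂) = 0 by ring,
            Real.exp_zero, one_mul, one_mul]
  · exact main_est hδ hyp h₁ h₂ s₁ s₂

end Aux

/-- In a `δ`-hyperbolic space, the geodesic flow exponentially expands `d⁺` and
exponentially contracts `d⁻`, with a constant `C ≥ 1` depending only on `δ`. -/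
theorem stmt_5 (δ : ℝ) (hδ : 0 ≤ δ) :
    ∃ C : ℝ, 1 ≤ C ∧
      ∀ (X : Type u) [MetricSpace X],
        (∀ p q r x : X,
          min (gromovProd x p q) (gromovProd x q r) - δ ≤ gromovProd x p r) →
        ∀ σ₁ σ₂ : ℝ → X,
          (∀ s t : ℝ, dist (σ₁ s) (σ₁ t) = |s - t|) →
          (∀ s t : ℝ, dist (σ₂ s) (σ₂ t) = |s - t|) →
          ∀ s₁ s₂ : ℝ,
            (C⁻¹ * Real.exp (s₁ + s₂) * dplus σ₁ σ₂ ≤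
                dplus (fun t => σ₁ (t + s₁)) (fun t => σ₂ (t + s₂)) ∧
              dplus (fun t => σ₁ (t + s₁)) (fun t => σ₂ (t + s₂)) ≤
                C * Real.exp (s₁ + s₂) * dplus σ₁ σ₂) ∧
            (C⁻¹ * Real.exp (-(s₁ + s₂)) * dminus σ₁ σ₂ ≤
                dminus (fun t => σ₁ (t + s₁)) (fun t => σ₂ (t + s₂)) ∧
              dminus (fun t => σ₁ (t + s₁)) (fun t => σ₂ (t + s₂)) ≤
                C * Real.exp (-(s₁ + s₂)) * dminus σ₁ σ₂) := by
  refine ⟨Real.exp (4 * δ), Real.one_le_exp (by linarith), ?_⟩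
  intro X _ hyp σ₁ σ₂ h₁ h₂ s₁ s₂
  have h₁' : IsGeodLine σ₁ := h₁
  have h₂' : IsGeodLine σ₂ := h₂
  have hCinv : (Real.exp (4 * δ))⁻¹ = Real.exp (-(4 * δ)) := (Real.exp_neg _).symm
  constructor
  · rw [hCinv]
    exact both_est hδ hyp h₁' h₂' s₁ s₂
  · -- dminus part: reduce to dplus of reversed lines
    have hminus : dminus σ₁ σ₂ = dplus (fun t => σ₁ (-t)) (fun t => σ₂ (-t)) := rfl
    have hshiftminus : dminus (fun t => σ₁ (t + s₁)) (fun t => σ₂ (t + s₂)) =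
        dplus (fun t => (fun r => σ₁ (-r)) (t + -s₁)) (fun t => (fun r => σ₂ (-r)) (t + -s₂)) := by
      simp only [dminus, dplus]
      congr 1
      funext t
      rw [show -(t + -s₁) = -t + s₁ from by ring, show -(t + -s₂) = -t + s₂ from by ring]
    have hb := both_est hδ hyp (h₁'.neg) (h₂'.neg) (-s₁) (-s₂)
    rw [hCinv, hshiftminus, hminus]
    rw [show -(s₁ + s₂) = -s₁ + -s₂ from by ring]
    exact hb
end

section
/- Let (X, m) be a probability space and T : X → X a measurable map preserving m. Let G : X → ℝ be a measurable function and c ≥ 0 a constant such that G ∘ T − G ≥ −c m-almost everywhere. Then G ∘ T − G is m-integrable and ∫_X (G ∘ T − G) dm = 0. -/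
open MeasureTheory Filter Topology

noncomputable def tauTrunc (M t : ℝ) : ℝ := max (min t M) (-M)

lemma tauTrunc_mono (M : ℝ) : Monotone (tauTrunc M) :=
  fun a b hab => max_le_max (min_le_min hab le_rfl) le_rfl

lemma tauTrunc_lip (M a b : ℝ) : |tauTrunc M a - tauTrunc M b| ≤ |a - b| := by
  calc |tauTrunc M a - tauTrunc M b| ≤ |min a M - min b M| :=
        abs_max_sub_max_le_abs _ _ _
    _ ≤ max |a - b| |M - M| := abs_min_sub_min_le_max a M b M
    _ = |a - b| := by simp

lemma tauTrunc_abs_le {M : ℝ} (hM : 0 ≤ M) (t : ℝ) : |tauTrunc M t| ≤ M :=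
  abs_le.2 ⟨le_max_right _ _, max_le ((min_le_right _ _)) (neg_le_self hM)⟩

lemma tauTrunc_eventually_eq (t : ℝ) :
    Tendsto (fun n : ℕ => tauTrunc n t) atTop (nhds t) := by
  apply Tendsto.congr' (f₁ := fun _ : ℕ => t) _ tendsto_const_nhds
  filter_upwards [eventually_ge_atTop ⌈|t|⌉₊] with n hn
  have h1 : |t| ≤ (n : ℝ) := le_trans (Nat.le_ceil _) (by exact_mod_cast hn)
  have h2 := abs_le.1 h1
  simp [tauTrunc, min_eq_left h2.2, max_eq_left h2.1]

lemma tauTrunc_lower {M a b c : ℝ} (hc : 0 ≤ c) (hab : -c ≤ a - b) :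
    -c ≤ tauTrunc M a - tauTrunc M b := by
  rcases le_total b a with hba | hba
  · have := tauTrunc_mono M hba
    linarith
  · have h1 := (abs_le.1 (tauTrunc_lip M a b)).1
    have h2 : -(a - b) ≤ -(-c) := neg_le_neg hab
    have h3 : |a - b| = -(a - b) ∨ |a - b| = a - b := by
      rcases abs_choice (a - b) with h | h
      · exact Or.inr h
      · exact Or.inl h
    rcases abs_sub_le_iff.1 (tauTrunc_lip M a b) with ⟨_, _⟩
    have h4 : |a - b| = b - a := by
      rw [abs_sub_comm, abs_of_nonneg (by linarith)]
    linarith [h1, h4 ▸ h1]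

/-- If `T` preserves the probability measure `m` and `G ∘ T - G ≥ -c` a.e. for a
measurable `G` and a constant `c ≥ 0`, then `G ∘ T - G` is integrable with zero mean. -/
theorem stmt_7 {X : Type*} [MeasurableSpace X] (m : Measure X) [IsProbabilityMeasure m]
    (T : X → X) (hT : MeasurePreserving T m m)
    (G : X → ℝ) (hG : Measurable G) (c : ℝ) (hc : 0 ≤ c)
    (h : ∀ᵐ x ∂m, -c ≤ G (T x) - G x) :
    Integrable (fun x => G (T x) - G x) m ∧ ∫ x, (G (T x) - G x) ∂m = 0 := by
  set F : X → ℝ := fun x => G (T x) - G x with hF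
  have hFmeas : Measurable F := (hG.comp hT.measurable).sub hG
  -- truncated functions
  set Gn : ℕ → X → ℝ := fun n x => tauTrunc n (G x) with hGn
  have hGnmeas : ∀ n, Measurable (Gn n) := fun n =>
    ((measurable_id.min measurable_const).max measurable_const).comp hG
  have hGnint : ∀ n, Integrable (Gn n) m := by
    intro n
    refine ⟨(hGnmeas n).aestronglyMeasurable, ?_⟩
    apply HasFiniteIntegral.of_bounded (C := (n : ℝ))
    filter_upwards with x
    exact tauTrunc_abs_le (Nat.cast_nonneg n) _
  set Dn : ℕ → X → ℝ := fun n x => Gn n (T x) - Gn n x with hDn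
  have hDnmeas : ∀ n, Measurable (Dn n) := fun n =>
    ((hGnmeas n).comp hT.measurable).sub (hGnmeas n)
  have hGnTint : ∀ n, Integrable (fun x => Gn n (T x)) m := by
    intro n
    refine ⟨((hGnmeas n).comp hT.measurable).aestronglyMeasurable, ?_⟩
    apply HasFiniteIntegral.of_bounded (C := (n : ℝ))
    filter_upwards with x
    exact tauTrunc_abs_le (Nat.cast_nonneg n) _
  have hDnint : ∀ n, Integrable (Dn n) m := fun n =>
    (hGnTint n).sub (hGnint n)
  have hDnzero : ∀ n, ∫ x, Dn n x ∂m = 0 := by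
    intro n
    have : ∫ x, Gn n (T x) ∂m = ∫ x, Gn n x ∂m := by
      rw [← hT.map_eq, integral_map hT.measurable.aemeasurable
        ((hGnmeas n).aestronglyMeasurable), hT.map_eq]
    rw [hDn]
    rw [integral_sub (hGnTint n) (hGnint n), this, sub_self]
  -- a.e. lower bound for Dn
  have hDnlb : ∀ n, ∀ᵐ x ∂m, -c ≤ Dn n x := by
    intro n
    filter_upwards [h] with x hx
    exact tauTrunc_lower hc hx
  -- pointwise domination |Dn| ≤ |F|
  have hDnbd : ∀ n x, |Dn n x| ≤ |F x| := fun n x => tauTrunc_lip _ _ _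
  -- pointwise convergence Dn → F
  have hDnto : ∀ x, Tendsto (fun n => Dn n x) atTop (nhds (F x)) := fun x =>
    (tauTrunc_eventually_eq (G (T x))).sub (tauTrunc_eventually_eq (G x))
  -- Fatou: F + c has finite lintegral
  have hIntDnc : ∀ n, ENNReal.ofReal (∫ x, (Dn n x + c) ∂m)
      = ∫⁻ x, ENNReal.ofReal (Dn n x + c) ∂m := by
    intro n
    apply ofReal_integral_eq_lintegral_ofReal ((hDnint n).add (integrable_const c))
    filter_upwards [hDnlb n] with x hx
    simp only [Pi.zero_apply, Pi.add_apply]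
    linarith
  have hIntDnc' : ∀ n, ∫⁻ x, ENNReal.ofReal (Dn n x + c) ∂m = ENNReal.ofReal c := by
    intro n
    rw [← hIntDnc n, integral_add (hDnint n) (integrable_const c), hDnzero n,
      integral_const, probReal_univ]
    simp
  have hfatou : ∫⁻ x, ENNReal.ofReal (F x + c) ∂m ≤ ENNReal.ofReal c := by
    have key : ∫⁻ x, ENNReal.ofReal (F x + c) ∂m
        ≤ Filter.atTop.liminf (fun n => ∫⁻ x, ENNReal.ofReal (Dn n x + c) ∂m) := by
      have hle : ∫⁻ x, ENNReal.ofReal (F x + c) ∂m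
          = ∫⁻ x, Filter.atTop.liminf (fun n => ENNReal.ofReal (Dn n x + c)) ∂m := by
        apply lintegral_congr fun x => ?_
        have : Tendsto (fun n => ENNReal.ofReal (Dn n x + c)) atTop
            (nhds (ENNReal.ofReal (F x + c))) :=
          (ENNReal.continuous_ofReal.tendsto _).comp ((hDnto x).add tendsto_const_nhds)
        exact (this.liminf_eq).symm
      rw [hle]
      exact lintegral_liminf_le fun n =>
        ENNReal.measurable_ofReal.comp ((hDnmeas n).add measurable_const)
    calc ∫⁻ x, ENNReal.ofReal (F x + c) ∂m
        ≤ Filter.atTop.liminf (fun n => ∫⁻ x, ENNReal.ofReal (Dn n x + c) ∂m) := key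
      _ = ENNReal.ofReal c := by simp [hIntDnc']
  -- F is integrable
  have hFc_nonneg : ∀ᵐ x ∂m, 0 ≤ F x + c := by
    filter_upwards [h] with x hx
    have hFx : F x = G (T x) - G x := rfl
    linarith
  have hFint : Integrable F m := by
    have hFc : Integrable (fun x => F x + c) m := by
      refine ⟨(hFmeas.add measurable_const).aestronglyMeasurable, ?_⟩
      rw [hasFiniteIntegral_iff_norm]
      have : ∫⁻ x, ENNReal.ofReal ‖F x + c‖ ∂m = ∫⁻ x, ENNReal.ofReal (F x + c) ∂m := by
        apply lintegral_congr_ae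
        filter_upwards [hFc_nonneg] with x hx
        rw [Real.norm_of_nonneg hx]
      rw [this]
      exact lt_of_le_of_lt hfatou ENNReal.ofReal_lt_top
    exact (hFc.sub (integrable_const c)).congr
      (by filter_upwards with x; simp)
  refine ⟨hFint, ?_⟩
  -- dominated convergence
  have hconv : Tendsto (fun n => ∫ x, Dn n x ∂m) atTop (nhds (∫ x, F x ∂m)) := by
    apply tendsto_integral_of_dominated_convergence (fun x => |F x|)
      (fun n => (hDnmeas n).aestronglyMeasurable) hFint.abs
    · intro n
      filter_upwards with x
      simpa using hDnbd n x
    · filter_upwards with x using hDnto x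
  have : Tendsto (fun _ : ℕ => (0 : ℝ)) atTop (nhds (∫ x, F x ∂m)) := by
    simpa [hDnzero] using hconv
  exact (tendsto_nhds_unique tendsto_const_nhds this).symm
end

section
/- Let μ be a finite Borel measure on ℝ, let ρ > 0, and let ε₀ ∈ (0, 1). Then for Lebesgue-almost every r ∈ (0, ρ), the series Σ_{k=0}^∞ μ([r − ε₀^k, r + ε₀^k]) converges. -/
open MeasureTheory Filter Topology
open scoped ENNReal NNReal

lemma aux_set_meas (a : ℝ) : MeasurableSet {p : ℝ × ℝ | p.1 - a ≤ p.2 ∧ p.2 ≤ p.1 + a} :=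
  (measurableSet_le (measurable_fst.sub measurable_const) measurable_snd).inter
    (measurableSet_le measurable_snd (measurable_fst.add measurable_const))

lemma aux_meas (μ : Measure ℝ) [IsFiniteMeasure μ] (a : ℝ) :
    Measurable (fun r : ℝ => μ (Set.Icc (r - a) (r + a))) := by
  have h := measurable_measure_prodMk_left (ν := μ) (aux_set_meas a)
  have hset : ∀ r : ℝ, Set.Icc (r - a) (r + a)
      = Prod.mk r ⁻¹' {p : ℝ × ℝ | p.1 - a ≤ p.2 ∧ p.2 ≤ p.1 + a} := by
    intro r; ext x; simp [Set.mem_Icc]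
  simp_rw [hset]
  exact h

lemma aux_bound (μ : Measure ℝ) [IsFiniteMeasure μ] (a : ℝ) (ha : 0 ≤ a) (s : Set ℝ)
    (hs : MeasurableSet s) :
    ∫⁻ r in s, μ (Set.Icc (r - a) (r + a)) ≤ ENNReal.ofReal (2 * a) * μ Set.univ := by
  have h1 : ∀ r : ℝ, μ (Set.Icc (r - a) (r + a))
      = ∫⁻ x, (Set.Icc (x - a) (x + a)).indicator (fun _ => (1 : ℝ≥0∞)) r ∂μ := by
    intro r
    have hfun : (fun x : ℝ => (Set.Icc (x - a) (x + a)).indicator (fun _ => (1 : ℝ≥0∞)) r)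
        = (Set.Icc (r - a) (r + a)).indicator (fun _ => (1 : ℝ≥0∞)) := by
      ext x
      have hiff : (x - a ≤ r ∧ r ≤ x + a) ↔ (r - a ≤ x ∧ x ≤ r + a) := by
        constructor <;> rintro ⟨h1, h2⟩ <;> exact ⟨by linarith, by linarith⟩
      simp only [Set.indicator_apply, Set.mem_Icc, hiff]
    rw [hfun]
    exact (lintegral_indicator_one measurableSet_Icc).symm
  calc ∫⁻ r in s, μ (Set.Icc (r - a) (r + a))
      = ∫⁻ r in s, ∫⁻ x, (Set.Icc (x - a) (x + a)).indicator (fun _ => (1 : ℝ≥0∞)) r ∂μ := by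
        simp_rw [h1]
    _ = ∫⁻ x, (∫⁻ r in s, (Set.Icc (x - a) (x + a)).indicator (fun _ => (1 : ℝ≥0∞)) r) ∂μ := by
        have heq : (Function.uncurry fun (r x : ℝ) =>
            (Set.Icc (x - a) (x + a)).indicator (fun _ => (1 : ℝ≥0∞)) r)
            = Set.indicator {p : ℝ × ℝ | p.2 - a ≤ p.1 ∧ p.1 ≤ p.2 + a}
              (fun _ => (1 : ℝ≥0∞)) := by
          ext p
          simp only [Function.uncurry, Set.indicator_apply, Set.mem_Icc, Set.mem_setOf_eq]
        have hmb : Measurable (Function.uncurry fun (r x : ℝ) =>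
            (Set.Icc (x - a) (x + a)).indicator (fun _ => (1 : ℝ≥0∞)) r) := by
          rw [heq]
          exact measurable_const.indicator
            ((measurableSet_le (measurable_snd.sub measurable_const) measurable_fst).inter
              (measurableSet_le measurable_fst (measurable_snd.add measurable_const)))
        exact lintegral_lintegral_swap (μ := volume.restrict s) (ν := μ) hmb.aemeasurable
    _ ≤ ∫⁻ _ : ℝ, ENNReal.ofReal (2 * a) ∂μ := by
        refine lintegral_mono (μ := μ) fun x => ?_
        calc ∫⁻ r in s, (Set.Icc (x - a) (x + a)).indicator (fun _ => (1 : ℝ≥0∞)) r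
            ≤ ∫⁻ r, (Set.Icc (x - a) (x + a)).indicator (fun _ => (1 : ℝ≥0∞)) r :=
              lintegral_mono' Measure.restrict_le_self le_rfl
          _ = volume (Set.Icc (x - a) (x + a)) := lintegral_indicator_one measurableSet_Icc
          _ = ENNReal.ofReal (2 * a) := by rw [Real.volume_Icc]; congr 1; ring
    _ = ENNReal.ofReal (2 * a) * μ Set.univ := by rw [lintegral_const]

/-- For a finite Borel measure `μ` on `ℝ`, `ρ > 0` and `ε₀ ∈ (0,1)`, for Lebesgue-a.e.
`r ∈ (0, ρ)` the series `Σ_k μ([r - ε₀^k, r + ε₀^k])` converges. -/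
theorem stmt_9 (μ : Measure ℝ) [IsFiniteMeasure μ] (ρ : ℝ) (hρ : 0 < ρ)
    (ε₀ : ℝ) (hε : ε₀ ∈ Set.Ioo (0 : ℝ) 1) :
    ∀ᵐ r ∂(volume.restrict (Set.Ioo 0 ρ)),
      ∑' k : ℕ, μ (Set.Icc (r - ε₀ ^ k) (r + ε₀ ^ k)) < ⊤ := by
  obtain ⟨hε0, hε1⟩ := hε
  apply ae_lt_top (Measurable.ennreal_tsum (fun k => aux_meas μ (ε₀ ^ k)))
  have hswap : ∫⁻ r in Set.Ioo 0 ρ, ∑' k : ℕ, μ (Set.Icc (r - ε₀ ^ k) (r + ε₀ ^ k))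
      = ∑' k : ℕ, ∫⁻ r in Set.Ioo 0 ρ, μ (Set.Icc (r - ε₀ ^ k) (r + ε₀ ^ k)) :=
    lintegral_tsum (fun k => (aux_meas μ (ε₀ ^ k)).aemeasurable)
  rw [hswap]
  have hbound : ∑' k : ℕ, ∫⁻ r in Set.Ioo 0 ρ, μ (Set.Icc (r - ε₀ ^ k) (r + ε₀ ^ k))
      ≤ ∑' k : ℕ, ENNReal.ofReal (2 * ε₀ ^ k) * μ Set.univ :=
    ENNReal.tsum_le_tsum (fun k => aux_bound μ (ε₀ ^ k) (by positivity) _ measurableSet_Ioo)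
  refine ne_top_of_le_ne_top ?_ hbound
  rw [ENNReal.tsum_mul_right]
  apply ENNReal.mul_ne_top ?_ (measure_ne_top μ _)
  have h2 : ∀ k : ℕ, ENNReal.ofReal (2 * ε₀ ^ k)
      = ENNReal.ofReal 2 * (ENNReal.ofReal ε₀) ^ k := by
    intro k; rw [ENNReal.ofReal_mul (by norm_num), ENNReal.ofReal_pow hε0.le]
  simp_rw [h2]
  rw [ENNReal.tsum_mul_left]
  apply ENNReal.mul_ne_top (by simp)
  rw [ENNReal.tsum_geometric]
  simp only [ne_eq, ENNReal.inv_eq_top, tsub_eq_zero_iff_le, not_le]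
  exact ENNReal.ofReal_lt_one.mpr hε1
end
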